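/- Let F be a unital C*-algebra and D ∈ F a positive element. A state ω on F satisfies ω(exp(itD)) = 1 for all t ∈ ℝ if and only if ω(D) = 0. Consequently every first-class constraint system is equivalent to one given by unitary constraints {exp(itD) : t ∈ ℝ, D ∈ D₊}. -/

import Mathlib

open Complex
open scoped Nat BigOperators

/-- A state on a unital C*-algebra: a normalized positive linear functional. -/
def IsState {F : Type*} [NormedRing F] [StarRing F] [NormedAlgebra ℂ F]
    (ω : F →ₗ[ℂ] ℂ) : Prop :=
  ω 1 = 1 ∧ ∀ a : F, ∃ r : ℝ, 0 ≤ r ∧ ω (star a * a) = (r : ℂ)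

section Aux

variable {F : Type*} [NormedRing F] [StarRing F] [CStarRing F]
    [NormedAlgebra ℂ F] [StarModule ℂ F] [CompleteSpace F]
    [PartialOrder F] [StarOrderedRing F]

lemma state_key (ω : F →ₗ[ℂ] ℂ) (hω : IsState ω) (a b : F) :
    starRingEnd ℂ (ω (star a * b) + ω (star b * a)) =
      ω (star a * b) + ω (star b * a) := by
  have hreal : ∀ x : F, starRingEnd ℂ (ω (star x * x)) = ω (star x * x) := by
    intro x
    obtain ⟨r, -, hr⟩ := hω.2 x
    rw [hr, Complex.conj_ofReal]
  have h := hreal (a + b)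
  have hexp : ω (star (a + b) * (a + b)) =
      ω (star a * a) + ω (star b * b) + (ω (star a * b) + ω (star b * a)) := by
    rw [star_add, add_mul, mul_add, mul_add]
    simp only [map_add]
    ring
  rw [hexp] at h
  simp only [map_add, hreal a, hreal b] at h
  simp only [map_add]
  linear_combination h

lemma state_symm (ω : F →ₗ[ℂ] ℂ) (hω : IsState ω) (a b : F) :
    ω (star a * b) = starRingEnd ℂ (ω (star b * a)) := by
  have h1 := state_key ω hω a b
  have h2 := state_key ω hω (Complex.I • a) b
  have e1 : star (Complex.I • a) * b = (-Complex.I) • (star a * b) := by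
    rw [star_smul, smul_mul_assoc]
    simp [Complex.conj_I]
  have e2 : star b * (Complex.I • a) = Complex.I • (star b * a) := by
    rw [mul_smul_comm]
  rw [e1, e2, map_smul, map_smul] at h2
  simp only [smul_eq_mul, map_add, map_mul, Complex.conj_neg_I, Complex.conj_I] at h1 h2
  set u := ω (star a * b)
  set v := ω (star b * a)
  have h1' : starRingEnd ℂ u + starRingEnd ℂ v = u + v := by
    simpa [map_add] using h1
  have h2' : -starRingEnd ℂ u + starRingEnd ℂ v = u - v := by
    linear_combination Complex.I * h2 +
      (starRingEnd ℂ v + v - starRingEnd ℂ u - u) * Complex.I_sq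
  linear_combination (-1/2 : ℂ) * h1' + (-1/2 : ℂ) * h2'

lemma state_star (ω : F →ₗ[ℂ] ℂ) (hω : IsState ω) (a : F) :
    ω (star a) = starRingEnd ℂ (ω a) := by
  simpa using state_symm ω hω a 1

lemma state_re_zero (ω : F →ₗ[ℂ] ℂ) (hω : IsState ω) {b : F}
    (hb : ω (star b * b) = 0) (a : F) : (ω (star a * b)).re = 0 := by
  obtain ⟨r0, hr0, hr0'⟩ := hω.2 a
  set u := ω (star a * b) with hu
  have expand : ∀ t : ℝ, ω (star (a + (t : ℂ) • b) * (a + (t : ℂ) • b)) =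
      (r0 : ℂ) + (t : ℂ) * (2 * u.re) := by
    intro t
    have hmul : star (a + (t : ℂ) • b) * (a + (t : ℂ) • b) =
        star a * a + (t : ℂ) • (star a * b) + (t : ℂ) • (star b * a) +
          ((t : ℂ) * (t : ℂ)) • (star b * b) := by
      rw [star_add, star_smul]
      simp only [Complex.star_def, Complex.conj_ofReal, add_mul, mul_add, smul_add,
        smul_mul_assoc, mul_smul_comm, smul_smul]
      abel
    rw [hmul]
    simp only [map_add, map_smul, smul_eq_mul, hb, hr0', mul_zero, add_zero]
    have hv : ω (star b * a) = starRingEnd ℂ u := state_symm ω hω b a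
    have hadd : u + starRingEnd ℂ u = 2 * (u.re : ℂ) := by
      rw [Complex.add_conj]; push_cast; ring
    linear_combination (t : ℂ) * hv + (t : ℂ) * hadd
  have hineq : ∀ t : ℝ, 0 ≤ r0 + t * (2 * u.re) := by
    intro t
    obtain ⟨rt, hrt, hrt'⟩ := hω.2 (a + (t : ℂ) • b)
    have := (expand t).symm.trans hrt'
    have hre : r0 + t * (2 * u.re) = rt := by exact_mod_cast this
    rw [hre]; exact hrt
  by_contra hne
  have h2 : 2 * u.re ≠ 0 := by
    intro h; exact hne (by linarith)
  have := hineq (-(r0 + 1) / (2 * u.re))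
  rw [div_mul_cancel₀ _ h2] at this
  linarith

lemma state_cs_zero (ω : F →ₗ[ℂ] ℂ) (hω : IsState ω) {b : F}
    (hb : ω (star b * b) = 0) (a : F) : ω (star b * a) = 0 := by
  have h1 : (ω (star a * b)).re = 0 := state_re_zero ω hω hb a
  have h2 : (ω (star (Complex.I • a) * b)).re = 0 := state_re_zero ω hω hb (Complex.I • a)
  have e1 : star (Complex.I • a) * b = (-Complex.I) • (star a * b) := by
    rw [star_smul, smul_mul_assoc]
    simp [Complex.conj_I]
  rw [e1, map_smul] at h2
  have him : (ω (star a * b)).im = 0 := by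
    simp only [smul_eq_mul, Complex.mul_re, Complex.neg_re, Complex.I_re, Complex.neg_im,
      Complex.I_im] at h2
    simpa using h2
  have hab : ω (star a * b) = 0 := Complex.ext h1 him
  rw [state_symm ω hω b a, hab, map_zero]

lemma state_pos (ω : F →ₗ[ℂ] ℂ) (hω : IsState ω) {x : F} (hx : 0 ≤ x) :
    (∃ r : ℝ, 0 ≤ r ∧ ω x = (r : ℂ)) ∧ (ω x = 0 → ∀ a, ω (x * a) = 0) := by
  rw [StarOrderedRing.nonneg_iff] at hx
  induction hx using AddSubmonoid.closure_induction with
  | mem y hy =>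
    obtain ⟨s, rfl⟩ := hy
    refine ⟨hω.2 s, fun h0 a => ?_⟩
    rw [mul_assoc]
    exact state_cs_zero ω hω h0 (s * a)
  | zero => exact ⟨⟨0, le_refl _, by simp⟩, fun _ a => by simp⟩
  | add y z hy hz ihy ihz =>
    obtain ⟨⟨ry, hry, hry'⟩, hy0⟩ := ihy
    obtain ⟨⟨rz, hrz, hrz'⟩, hz0⟩ := ihz
    refine ⟨⟨ry + rz, by linarith, by rw [map_add, hry', hrz']; push_cast; ring⟩, ?_⟩
    intro h0 a
    rw [map_add, hry', hrz'] at h0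
    have : (ry : ℂ) + rz = ((ry + rz : ℝ) : ℂ) := by push_cast; ring
    rw [this] at h0
    have hsum : ry + rz = 0 := by exact_mod_cast h0
    have hyz : ry = 0 ∧ rz = 0 := ⟨by linarith, by linarith⟩
    rw [add_mul, map_add, hy0 (by rw [hry', hyz.1]; simp) a,
      hz0 (by rw [hrz', hyz.2]; simp) a, add_zero]


lemma state_bound (ω : F →ₗ[ℂ] ℂ) (hω : IsState ω) (a : F) : ‖ω a‖ ≤ 2 * ‖a‖ := by
  letI : CStarAlgebra F :=
    { toNormedRing := inferInstance
      toStarRing := inferInstance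
      toCompleteSpace := inferInstance
      toCStarRing := inferInstance
      toNormedAlgebra := inferInstance
      toStarModule := inferInstance }
  have halg : ∀ r : ℝ, ω (algebraMap ℝ F r) = (r : ℂ) := by
    intro r
    have : algebraMap ℝ F r = (r : ℂ) • (1 : F) := by
      rw [Algebra.algebraMap_eq_smul_one]
      rw [show ((r : ℂ)) = r • (1 : ℂ) by simp, smul_assoc, one_smul]
    rw [this, map_smul, hω.1, smul_eq_mul, mul_one]
  have hsa : ∀ x : F, IsSelfAdjoint x → ‖ω x‖ ≤ ‖x‖ := by
    intro x hx
    have hreal : starRingEnd ℂ (ω x) = ω x := by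
      conv_lhs => rw [← state_star ω hω x, hx.star_eq]
    have h1 : 0 ≤ algebraMap ℝ F ‖x‖ - x := sub_nonneg.mpr hx.le_algebraMap_norm_self
    have h2 : 0 ≤ x + algebraMap ℝ F ‖x‖ := by
      have h := sub_nonneg.mpr hx.neg_algebraMap_norm_le_self
      rwa [sub_neg_eq_add] at h
    obtain ⟨r1, hr1, hr1'⟩ := (state_pos ω hω h1).1
    obtain ⟨r2, hr2, hr2'⟩ := (state_pos ω hω h2).1
    rw [map_sub, halg] at hr1'
    rw [map_add, halg] at hr2'
    have hxre : ω x = ((ω x).re : ℂ) := (Complex.conj_eq_iff_re.mp hreal).symm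
    rw [hxre] at hr1' hr2' ⊢
    have e1 : ‖x‖ - (ω x).re = r1 := by exact_mod_cast hr1'
    have e2 : (ω x).re + ‖x‖ = r2 := by exact_mod_cast hr2'
    rw [Complex.norm_real, Real.norm_eq_abs, abs_le]
    constructor <;> linarith
  obtain ⟨x, hxdef⟩ : ∃ x, x = (2⁻¹ : ℂ) • (a + star a) := ⟨_, rfl⟩
  obtain ⟨y, hydef⟩ : ∃ y, y = (2⁻¹ : ℂ) • (a - star a) := ⟨_, rfl⟩
  have hxy : a = x + y := by
    rw [hxdef, hydef, ← smul_add]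
    rw [show a + star a + (a - star a) = (2 : ℂ) • a by
      rw [two_smul]; abel]
    rw [smul_smul]
    norm_num
  have hxsa : IsSelfAdjoint x := by
    rw [hxdef, IsSelfAdjoint, star_smul, star_add, star_star]
    rw [show star (2⁻¹ : ℂ) = (2⁻¹ : ℂ) by simp [Complex.star_def], add_comm]
  have hysa : IsSelfAdjoint ((-Complex.I) • y) := by
    have hy2 : (-Complex.I) • y = (-Complex.I * 2⁻¹) • (a - star a) := by
      rw [hydef, smul_smul]
    rw [IsSelfAdjoint, hy2, star_smul, star_sub, star_star]
    have hc : star (-Complex.I * 2⁻¹) = Complex.I * 2⁻¹ := by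
      simp [Complex.star_def]
    rw [hc, show star a - a = -(a - star a) by abel, smul_neg,
      show Complex.I * 2⁻¹ = -(-Complex.I * 2⁻¹) by ring, neg_smul, neg_neg]
  have hna : ‖x‖ ≤ ‖a‖ := by
    rw [hxdef]
    calc ‖(2⁻¹ : ℂ) • (a + star a)‖ = 2⁻¹ * ‖a + star a‖ := by
          rw [norm_smul]; norm_num
      _ ≤ 2⁻¹ * (‖a‖ + ‖star a‖) := by
          gcongr; exact norm_add_le _ _
      _ = ‖a‖ := by rw [norm_star]; ring
  have hny : ‖(-Complex.I) • y‖ ≤ ‖a‖ := by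
    rw [norm_smul, hydef, norm_smul]
    calc ‖(-Complex.I : ℂ)‖ * (‖(2⁻¹ : ℂ)‖ * ‖a - star a‖) = 2⁻¹ * ‖a - star a‖ := by
          simp
      _ ≤ 2⁻¹ * (‖a‖ + ‖star a‖) := by gcongr; exact norm_sub_le _ _
      _ = ‖a‖ := by rw [norm_star]; ring
  have hyval : ‖ω y‖ = ‖ω ((-Complex.I) • y)‖ := by
    have h1 : ‖(-Complex.I : ℂ)‖ = 1 := by simp
    rw [map_smul, norm_smul, h1, one_mul]
  calc ‖ω a‖ = ‖ω x + ω y‖ := by rw [hxy, map_add]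
    _ ≤ ‖ω x‖ + ‖ω y‖ := norm_add_le _ _
    _ ≤ ‖a‖ + ‖a‖ := by
        rw [hyval]
        exact add_le_add ((hsa x hxsa).trans hna) ((hsa _ hysa).trans hny)
    _ = 2 * ‖a‖ := by ring

/-- A state as a continuous linear map. -/
noncomputable def stateCLM (ω : F →ₗ[ℂ] ℂ) (hω : IsState ω) : F →L[ℂ] ℂ :=
  LinearMap.mkContinuous ω 2 (state_bound ω hω)

@[simp] lemma stateCLM_apply (ω : F →ₗ[ℂ] ℂ) (hω : IsState ω) (a : F) :
    stateCLM ω hω a = ω a := rfl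

lemma state_exp_one (ω : F →ₗ[ℂ] ℂ) (hω : IsState ω) {D : F} (hD : 0 ≤ D)
    (h0 : ω D = 0) (z : ℂ) : ω (NormedSpace.exp (z • D)) = 1 := by
  have hpow : ∀ n : ℕ, n ≠ 0 → ω (D ^ n) = 0 := by
    intro n hn
    obtain ⟨m, rfl⟩ := Nat.exists_eq_succ_of_ne_zero hn
    rw [pow_succ']
    exact (state_pos ω hω hD).2 h0 (D ^ m)
  have hsum := NormedSpace.expSeries_summable' (𝕂 := ℂ) (z • D)
  rw [NormedSpace.exp_eq_tsum (𝕂 := ℂ)]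
  calc ω (∑' n : ℕ, ((n ! : ℂ)⁻¹) • (z • D) ^ n)
      = ∑' n : ℕ, ω (((n ! : ℂ)⁻¹) • (z • D) ^ n) :=
        (stateCLM ω hω).map_tsum hsum
    _ = 1 := by
        rw [tsum_eq_single 0]
        · simp [hω.1]
        · intro n hn
          rw [smul_pow, map_smul, map_smul, hpow n hn]
          simp

lemma state_exp_forward (ω : F →ₗ[ℂ] ℂ) (hω : IsState ω) (D : F)
    (h : ∀ t : ℝ, ω (NormedSpace.exp (((t : ℂ) * Complex.I) • D)) = 1) :
    ω D = 0 := by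
  have h1 : HasDerivAt (fun u : ℂ => NormedSpace.exp (u • (Complex.I • D)))
      (Complex.I • D) (((0 : ℝ) : ℂ)) := by
    have := hasDerivAt_exp_smul_const (𝕂 := ℂ) (Complex.I • D) 0
    simp only [zero_smul, NormedSpace.exp_zero, one_mul] at this
    rw [show (((0 : ℝ) : ℂ)) = 0 from Complex.ofReal_zero]
    exact this
  have h2 : HasDerivAt (fun t : ℝ => NormedSpace.exp (((t : ℂ)) • (Complex.I • D)))
      (Complex.I • D) 0 := by
    have hof : HasDerivAt (fun t : ℝ => (t : ℂ)) 1 0 := by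
      simpa using (hasDerivAt_id (0 : ℝ)).ofReal_comp
    have := HasDerivAt.scomp (0 : ℝ) h1 hof
    rw [one_smul] at this
    exact this
  have h3 : HasDerivAt
      (fun t : ℝ => stateCLM ω hω (NormedSpace.exp (((t : ℂ)) • (Complex.I • D))))
      (stateCLM ω hω (Complex.I • D)) 0 :=
    ((stateCLM ω hω).restrictScalars ℝ).hasFDerivAt.comp_hasDerivAt 0 h2
  have h4 : (fun t : ℝ => stateCLM ω hω (NormedSpace.exp (((t : ℂ)) • (Complex.I • D))))
      = fun _ => (1 : ℂ) := by
    funext t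
    rw [stateCLM_apply, smul_smul]
    exact h t
  rw [h4] at h3
  have h5 := h3.unique (hasDerivAt_const 0 (1 : ℂ))
  rw [stateCLM_apply, map_smul, smul_eq_mul] at h5
  rcases mul_eq_zero.mp h5 with h | h
  · exact absurd h Complex.I_ne_zero
  · exact h

end Aux

theorem stmt_13 {F : Type*} [NormedRing F] [StarRing F] [CStarRing F]
    [NormedAlgebra ℂ F] [StarModule ℂ F] [CompleteSpace F]
    [PartialOrder F] [StarOrderedRing F]
    (C : Set F) (hC : ∀ c ∈ C, star c ∈ C) :
    let Dset : Set F :=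
      closure ((Submodule.span ℂ {x : F | ∃ a : F, ∃ c ∈ C, x = a * c} : Submodule ℂ F) : Set F) ∩
      closure ((Submodule.span ℂ {x : F | ∃ a : F, ∃ c ∈ C, x = c * a} : Submodule ℂ F) : Set F)
    (∀ ω : F →ₗ[ℂ] ℂ, IsState ω → ∀ D : F, 0 ≤ D →
      ((∀ t : ℝ, ω (NormedSpace.exp (((t : ℂ) * Complex.I) • D)) = 1) ↔ ω D = 0)) ∧
    (∀ ω : F →ₗ[ℂ] ℂ, IsState ω →
      ((∀ c ∈ C, ω (star c * c) = 0) ↔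
        ∀ D ∈ Dset, 0 ≤ D → ∀ t : ℝ, ω (NormedSpace.exp (((t : ℂ) * Complex.I) • D)) = 1)) := by
  intro Dset
  constructor
  · intro ω hω D hD
    constructor
    · exact state_exp_forward ω hω D
    · intro h0 t
      exact state_exp_one ω hω hD h0 _
  · intro ω hω
    constructor
    · intro hdirac D hDmem hDpos t
      have hgen : ∀ x ∈ {x : F | ∃ a : F, ∃ c ∈ C, x = a * c}, ω x = 0 := by
        rintro x ⟨a, c, hc, rfl⟩
        have h1 : ω (star c * c) = 0 := hdirac c hc
        have h2 : ∀ y, ω (star c * y) = 0 := state_cs_zero ω hω h1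
        calc ω (a * c) = ω (star (star a) * c) := by rw [star_star]
          _ = starRingEnd ℂ (ω (star c * star a)) := state_symm ω hω (star a) c
          _ = 0 := by rw [h2 (star a)]; simp
      have hspan : Submodule.span ℂ {x : F | ∃ a : F, ∃ c ∈ C, x = a * c} ≤ LinearMap.ker ω :=
        Submodule.span_le.mpr fun x hx => LinearMap.mem_ker.mpr (hgen x hx)
      have hclosed : closure ((Submodule.span ℂ {x : F | ∃ a : F, ∃ c ∈ C, x = a * c} :
          Submodule ℂ F) : Set F) ⊆ (stateCLM ω hω) ⁻¹' {0} :=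
        closure_minimal (fun x hx => by simpa using hspan hx)
          (IsClosed.preimage (stateCLM ω hω).continuous isClosed_singleton)
      have h0 : ω D = 0 := by simpa using hclosed hDmem.1
      exact state_exp_one ω hω hDpos h0 _
    · intro hU c hc
      have hpos : 0 ≤ star c * c := star_mul_self_nonneg c
      have hmem : star c * c ∈ Dset :=
        ⟨subset_closure (Submodule.subset_span ⟨star c, c, hc, rfl⟩),
         subset_closure (Submodule.subset_span ⟨c, star c, hC c hc, rfl⟩)⟩
      exact state_exp_forward ω hω _ (hU _ hmem hpos)
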